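/- Let a > 0 and ρ₁, ρ₂ > 0 be real numbers, and let d be a real number with |ρ₁ − ρ₂| ≤ d ≤ ρ₁ + ρ₂. Then (cosh(a·d) − cosh(a·(ρ₁ − ρ₂))) / (2 · sinh(a·ρ₁) · sinh(a·ρ₂)) ≤ exp(−a·(ρ₁ + ρ₂ − d)). -/

import Mathlib

lemma cosh_sub_cosh' (x y : ℝ) :
    Real.cosh x - Real.cosh y = 2 * Real.sinh ((x + y) / 2) * Real.sinh ((x - y) / 2) := by
  rw [Real.cosh_eq, Real.cosh_eq, Real.sinh_eq, Real.sinh_eq]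
  have h1 : Real.exp x = Real.exp ((x + y) / 2) * Real.exp ((x - y) / 2) := by
    rw [← Real.exp_add]; ring_nf
  have h2 : Real.exp (-x) = Real.exp (-((x + y) / 2)) * Real.exp (-((x - y) / 2)) := by
    rw [← Real.exp_add]; ring_nf
  have h3 : Real.exp y = Real.exp ((x + y) / 2) * Real.exp (-((x - y) / 2)) := by
    rw [← Real.exp_add]; ring_nf
  have h4 : Real.exp (-y) = Real.exp (-((x + y) / 2)) * Real.exp ((x - y) / 2) := by
    rw [← Real.exp_add]; ring_nf
  rw [h1, h2, h3, h4]; ring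

lemma sinh_sub_le (u s : ℝ) (hs : 0 ≤ s) :
    Real.sinh (u - s) ≤ Real.exp (-s) * Real.sinh u := by
  rw [Real.sinh_eq, Real.sinh_eq]
  have h1 : Real.exp (u - s) = Real.exp (-s) * Real.exp u := by
    rw [← Real.exp_add]; ring_nf
  have h2 : Real.exp (-s) * Real.exp (-u) ≤ Real.exp (-(u - s)) := by
    rw [← Real.exp_add]
    exact Real.exp_le_exp.2 (by linarith)
  rw [h1]; linarith

theorem cosh_deficiency_bound (a ρ₁ ρ₂ d : ℝ) (ha : 0 < a) (h₁ : 0 < ρ₁) (h₂ : 0 < ρ₂)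
    (hd₁ : |ρ₁ - ρ₂| ≤ d) (hd₂ : d ≤ ρ₁ + ρ₂) :
    (Real.cosh (a * d) - Real.cosh (a * (ρ₁ - ρ₂))) /
        (2 * Real.sinh (a * ρ₁) * Real.sinh (a * ρ₂)) ≤
      Real.exp (-(a * (ρ₁ + ρ₂ - d))) := by
  have h12 : ρ₁ - ρ₂ ≤ d := le_trans (le_abs_self _) hd₁
  have h21 : ρ₂ - ρ₁ ≤ d := by
    have := neg_abs_le (ρ₁ - ρ₂); linarith [le_trans (neg_le_abs (ρ₁ - ρ₂)) hd₁]
  set s : ℝ := a * (ρ₁ + ρ₂ - d) / 2 with hsdef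
  have hs : 0 ≤ s := by
    have : 0 ≤ ρ₁ + ρ₂ - d := by linarith
    positivity
  have hden : 0 < 2 * Real.sinh (a * ρ₁) * Real.sinh (a * ρ₂) := by
    have := Real.sinh_pos_iff.2 (mul_pos ha h₁)
    have := Real.sinh_pos_iff.2 (mul_pos ha h₂)
    positivity
  rw [div_le_iff₀ hden]
  have key : Real.cosh (a * d) - Real.cosh (a * (ρ₁ - ρ₂)) =
      2 * Real.sinh (a * ρ₁ - s) * Real.sinh (a * ρ₂ - s) := by
    rw [cosh_sub_cosh' (a * d) (a * (ρ₁ - ρ₂))]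
    congr 2 <;> rw [hsdef] <;> ring_nf
  have hb1 : Real.sinh (a * ρ₁ - s) ≤ Real.exp (-s) * Real.sinh (a * ρ₁) :=
    sinh_sub_le _ _ hs
  have hb2 : Real.sinh (a * ρ₂ - s) ≤ Real.exp (-s) * Real.sinh (a * ρ₂) :=
    sinh_sub_le _ _ hs
  have hn1 : 0 ≤ Real.sinh (a * ρ₁ - s) := by
    apply Real.sinh_nonneg_iff.2
    have : ρ₁ + ρ₂ - d ≤ 2 * ρ₁ := by linarith
    rw [hsdef]
    nlinarith
  have hn2 : 0 ≤ Real.sinh (a * ρ₂ - s) := by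
    apply Real.sinh_nonneg_iff.2
    have : ρ₁ + ρ₂ - d ≤ 2 * ρ₂ := by linarith
    rw [hsdef]
    nlinarith
  have hexp : Real.exp (-s) * Real.exp (-s) = Real.exp (-(a * (ρ₁ + ρ₂ - d))) := by
    rw [← Real.exp_add, hsdef]; ring_nf
  have hp1 : 0 < Real.sinh (a * ρ₁) := Real.sinh_pos_iff.2 (mul_pos ha h₁)
  have hp2 : 0 < Real.sinh (a * ρ₂) := Real.sinh_pos_iff.2 (mul_pos ha h₂)
  calc Real.cosh (a * d) - Real.cosh (a * (ρ₁ - ρ₂))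
      = 2 * Real.sinh (a * ρ₁ - s) * Real.sinh (a * ρ₂ - s) := key
    _ ≤ 2 * (Real.exp (-s) * Real.sinh (a * ρ₁)) * (Real.exp (-s) * Real.sinh (a * ρ₂)) := by
        have he : 0 ≤ Real.exp (-s) := (Real.exp_pos _).le
        nlinarith
    _ = Real.exp (-(a * (ρ₁ + ρ₂ - d))) * (2 * Real.sinh (a * ρ₁) * Real.sinh (a * ρ₂)) := by
        rw [← hexp]; ring
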